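/- Let (μ_t)_{t>0} satisfy condition (M), let p ∈ [1,∞), f ∈ W²_p(ℝ^d) (Sobolev space), and M > 0. Then sup_{t>0} ‖∫ (f(·+y)-f(·))/t μ_t(dy)‖_{L^p} ≤ 2c_M‖f‖_p + C_M max{‖∇f‖_p, ‖∇²f‖_p}, where c_M = sup_{t>0} μ_t({|y|>M})/t and C_M = sup_{t>0}(1/t)(|∫_{|y|≤M} y μ_t(dy)| + ∫_{|y|≤M}|y|² μ_t(dy)). -/

import Mathlib

open MeasureTheory Filter Set
open scoped ENNReal Topology
lemma jensen_minkowski {X Y : Type*} [MeasurableSpace X] [MeasurableSpace Y]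
    (μ : Measure X) (ν : Measure Y) [SFinite μ] [SFinite ν]
    {q : ℝ} (hq : 1 ≤ q) {g : X → Y → ℝ≥0∞} (hg : Measurable (Function.uncurry g))
    {w : Y → ℝ≥0∞} (hw : Measurable w) {c : ℝ≥0∞}
    (hgc : ∀ y, (∫⁻ x, g x y ^ q ∂μ) ≤ c ^ q) :
    (∫⁻ x, (∫⁻ y, w y * g x y ∂ν) ^ q ∂μ) ≤ (c * ∫⁻ y, w y ∂ν) ^ q := by
  have hq0 : (0:ℝ) < q := lt_of_lt_of_le one_pos hq
  have hgy : ∀ y, Measurable (fun x => g x y) := fun y =>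
    hg.comp (measurable_id.prodMk measurable_const)
  have hgx : ∀ x, Measurable (g x) := fun x =>
    hg.comp (measurable_const.prodMk measurable_id)
  have hinner : Measurable fun x => ∫⁻ y, w y * g x y ∂ν :=
    Measurable.lintegral_prod_right ((hw.comp measurable_snd).mul hg)
  set W := ∫⁻ y, w y ∂ν with hW
  have hswap : ∀ r : ℝ, (∫⁻ x, ∫⁻ y, w y * g x y ^ r ∂ν ∂μ)
      = ∫⁻ y, w y * ∫⁻ x, g x y ^ r ∂μ ∂ν := by
    intro r
    rw [lintegral_lintegral_swap]
    · exact lintegral_congr fun y => lintegral_const_mul _ ((hgy y).pow_const r)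
    · exact ((hw.comp measurable_snd).mul
        ((hg.comp (measurable_fst.prodMk measurable_snd)).pow_const r)).aemeasurable
  have hswap1 : (∫⁻ x, ∫⁻ y, w y * g x y ∂ν ∂μ)
      = ∫⁻ y, w y * ∫⁻ x, g x y ∂μ ∂ν := by simpa using hswap 1
  rcases eq_or_lt_of_le hq with hq1 | hq1
  · subst hq1
    simp only [ENNReal.rpow_one]
    calc (∫⁻ x, ∫⁻ y, w y * g x y ∂ν ∂μ)
        = ∫⁻ y, w y * ∫⁻ x, g x y ∂μ ∂ν := hswap1
      _ ≤ ∫⁻ y, w y * c ∂ν := lintegral_mono fun y =>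
          mul_le_mul_right (by simpa using hgc y) _
      _ = c * W := by rw [lintegral_mul_const _ hw, mul_comm]
  · rcases eq_or_ne W 0 with hW0 | hW0
    · have hwz : w =ᵐ[ν] 0 := (lintegral_eq_zero_iff hw).mp (by rw [← hW]; exact hW0)
      have hz : ∀ x, (∫⁻ y, w y * g x y ∂ν) = 0 := by
        intro x
        rw [lintegral_eq_zero_iff' (f := fun y => w y * g x y) ((hw.mul (hgx x)).aemeasurable)]
        filter_upwards [hwz] with y hy
        simp [hy]
      simp only [hz]
      simp [ENNReal.zero_rpow_of_pos hq0]
    rcases eq_or_ne c 0 with hc0 | hc0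
    · have hg0 : ∀ y, (∫⁻ x, g x y ∂μ) = 0 := by
        intro y
        have h1 := hgc y
        rw [hc0, ENNReal.zero_rpow_of_pos hq0, le_zero_iff] at h1
        have h2 := (lintegral_eq_zero_iff ((hgy y).pow_const q)).mp h1
        rw [lintegral_eq_zero_iff (hgy y)]
        filter_upwards [h2] with x hx
        simpa [ENNReal.rpow_eq_zero_iff, hq0, hq0.not_gt] using hx
      have h0 : (∫⁻ x, ∫⁻ y, w y * g x y ∂ν ∂μ) = 0 := by
        rw [hswap1]
        simp [hg0]
      have hz : (fun x => ∫⁻ y, w y * g x y ∂ν) =ᵐ[μ] 0 :=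
        (lintegral_eq_zero_iff hinner).mp h0
      have : (∫⁻ x, (∫⁻ y, w y * g x y ∂ν) ^ q ∂μ) = 0 := by
        rw [← lintegral_zero]
        refine lintegral_congr_ae ?_
        filter_upwards [hz] with x hx
        simp only [Pi.zero_apply] at hx
        simp [hx, ENNReal.zero_rpow_of_pos hq0]
      simp [this]
    rcases eq_or_ne c ∞ with hctop | hctop
    · simp [hctop, ENNReal.top_mul hW0, ENNReal.top_rpow_of_pos hq0, le_top]
    rcases eq_or_ne W ∞ with hWtop | hWtop
    · rw [hWtop, ENNReal.mul_top hc0, ENNReal.top_rpow_of_pos hq0]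
      exact le_top
    -- main case : 1 < q, W ≠ 0, W ≠ ∞, c ≠ 0, c ≠ ∞
    have hq0' : q ≠ 0 := hq0.ne'
    have hconj : q.HolderConjugate q.conjExponent := Real.HolderConjugate.conjExponent hq1
    have hconj' : q.conjExponent.HolderConjugate q := hconj.symm
    -- pointwise Hölder bound
    have hpt : ∀ x, (∫⁻ y, w y * g x y ∂ν) ^ q ≤ W ^ (q - 1) * ∫⁻ y, w y * g x y ^ q ∂ν := by
      intro x
      have hH := ENNReal.lintegral_mul_le_Lp_mul_Lq (ν.withDensity w) hconj'
        (f := fun _ => 1) (g := fun y => g x y)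
        aemeasurable_const (hgx x).aemeasurable
      simp only [Pi.mul_apply, one_mul, ENNReal.one_rpow, lintegral_const] at hH
      rw [lintegral_withDensity_eq_lintegral_mul _ hw (hgx x),
        lintegral_withDensity_eq_lintegral_mul _ hw ((hgx x).pow_const q)] at hH
      have hWuniv : (ν.withDensity w) univ = W := by
        rw [withDensity_apply _ MeasurableSet.univ, Measure.restrict_univ, hW]
      rw [hWuniv] at hH
      simp only [Pi.mul_apply] at hH
      have h2 := ENNReal.rpow_le_rpow hH hq0.le
      rw [ENNReal.mul_rpow_of_nonneg _ _ hq0.le, ← ENNReal.rpow_mul,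
        ← ENNReal.rpow_mul, one_div_mul_cancel hq0', ENNReal.rpow_one] at h2
      have hexp : 1 / q.conjExponent * q = q - 1 := by
        have h3 := hconj.inv_add_inv_eq_one
        have h4 : 1 / q.conjExponent = 1 - 1 / q := by rw [one_div, one_div]; linarith
        rw [h4]
        field_simp
      rw [hexp] at h2
      exact h2
    -- integrate the pointwise bound
    calc (∫⁻ x, (∫⁻ y, w y * g x y ∂ν) ^ q ∂μ)
        ≤ ∫⁻ x, W ^ (q - 1) * ∫⁻ y, w y * g x y ^ q ∂ν ∂μ := lintegral_mono hpt
      _ = W ^ (q - 1) * ∫⁻ x, ∫⁻ y, w y * g x y ^ q ∂ν ∂μ := by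
          have hm : Measurable (Function.uncurry fun (x : X) (y : Y) => w y * g x y ^ q) :=
            (hw.comp measurable_snd).mul (hg.pow_const q)
          rw [lintegral_const_mul _ hm.lintegral_prod_right]
      _ = W ^ (q - 1) * ∫⁻ y, w y * ∫⁻ x, g x y ^ q ∂μ ∂ν := by rw [hswap q]
      _ ≤ W ^ (q - 1) * ∫⁻ y, w y * c ^ q ∂ν := by
          gcongr with y
          exact hgc y
      _ = W ^ (q - 1) * (W * c ^ q) := by rw [lintegral_mul_const _ hw, hW, mul_comm]
      _ = (c * W) ^ q := by
          rw [ENNReal.mul_rpow_of_nonneg _ _ hq0.le]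
          have hWq : W ^ (q - 1) * W = W ^ q := by
            nth_rewrite 2 [← ENNReal.rpow_one W]
            rw [← ENNReal.rpow_add _ _ hW0 hWtop]
            norm_num
          rw [← hWq]
          ring
variable {E : Type*} [NormedAddCommGroup E] [NormedSpace ℝ E]

lemma line_cont (x y : E) : Continuous fun s : ℝ => x + s • y :=
  continuous_const.add (continuous_id.smul continuous_const)

lemma taylor_norm_bound {f : E → ℝ} (hf : ContDiff ℝ 2 f) (x y : E) :
    ‖f (x + y) - f x - fderiv ℝ f x y‖ ≤
      ‖y‖ ^ 2 * ∫ u in (0:ℝ)..1, ‖fderiv ℝ (fderiv ℝ f) (x + u • y)‖ := by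
  have hdf : Differentiable ℝ f := hf.differentiable (by norm_num)
  have hf'1 : ContDiff ℝ 1 (fderiv ℝ f) := hf.fderiv_right (by norm_num)
  have hf'c : Continuous (fderiv ℝ f) := hf'1.continuous
  have hdf' : Differentiable ℝ (fderiv ℝ f) := hf'1.differentiable one_ne_zero
  have hf''c : Continuous (fderiv ℝ (fderiv ℝ f)) := hf'1.continuous_fderiv one_ne_zero
  have hline : ∀ s : ℝ, HasDerivAt (fun s : ℝ => x + s • y) y s := fun s => by
    simpa using ((hasDerivAt_id s).smul_const y).const_add x
  -- FTC for f along the segment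
  have key1 : f (x + y) - f x = ∫ s in (0:ℝ)..1, fderiv ℝ f (x + s • y) y := by
    have hder : ∀ s ∈ uIcc (0:ℝ) 1, HasDerivAt (fun s : ℝ => f (x + s • y))
        (fderiv ℝ f (x + s • y) y) s := fun s _ =>
      (hdf (x + s • y)).hasFDerivAt.comp_hasDerivAt s (hline s)
    have hcont : Continuous fun s : ℝ => fderiv ℝ f (x + s • y) y :=
      (hf'c.comp (line_cont x y)).clm_apply continuous_const
    have := intervalIntegral.integral_eq_sub_of_hasDerivAt hder
      (hcont.intervalIntegrable 0 1)
    rw [this]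
    norm_num
  -- FTC for fderiv f along the segment
  have key2 : ∀ s : ℝ, fderiv ℝ f (x + s • y) - fderiv ℝ f x =
      ∫ u in (0:ℝ)..s, (fderiv ℝ (fderiv ℝ f) (x + u • y)) y := by
    intro s
    have hder : ∀ u ∈ uIcc (0:ℝ) s, HasDerivAt (fun u : ℝ => fderiv ℝ f (x + u • y))
        ((fderiv ℝ (fderiv ℝ f) (x + u • y)) y) u := fun u _ =>
      (hdf' (x + u • y)).hasFDerivAt.comp_hasDerivAt u (hline u)
    have hcont : Continuous fun u : ℝ => (fderiv ℝ (fderiv ℝ f) (x + u • y)) y :=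
      (hf''c.comp (line_cont x y)).clm_apply continuous_const
    have := intervalIntegral.integral_eq_sub_of_hasDerivAt hder
      (hcont.intervalIntegrable 0 s)
    rw [this]
    norm_num
  set I : ℝ := ∫ u in (0:ℝ)..1, ‖fderiv ℝ (fderiv ℝ f) (x + u • y)‖ with hI
  have hIcont : Continuous fun u : ℝ => ‖fderiv ℝ (fderiv ℝ f) (x + u • y)‖ :=
    Continuous.norm (E := E →L[ℝ] E →L[ℝ] ℝ) (hf''c.comp (line_cont x y))
  -- bound on the first-derivative increment
  have hbd : ∀ s ∈ Icc (0:ℝ) 1, ‖fderiv ℝ f (x + s • y) - fderiv ℝ f x‖ ≤ I * ‖y‖ := by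
    intro s hs
    rw [key2 s]
    calc ‖∫ u in (0:ℝ)..s, (fderiv ℝ (fderiv ℝ f) (x + u • y)) y‖
        ≤ ∫ u in (0:ℝ)..s, ‖(fderiv ℝ (fderiv ℝ f) (x + u • y)) y‖ :=
          intervalIntegral.norm_integral_le_integral_norm hs.1
      _ ≤ ∫ u in (0:ℝ)..s, ‖fderiv ℝ (fderiv ℝ f) (x + u • y)‖ * ‖y‖ := by
          apply intervalIntegral.integral_mono_on hs.1
          · exact (((hf''c.comp (line_cont x y)).clm_apply
              continuous_const).norm).intervalIntegrable 0 s
          · exact (hIcont.mul continuous_const).intervalIntegrable 0 s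
          · intro u _
            exact ContinuousLinearMap.le_opNorm _ _
      _ ≤ ∫ u in (0:ℝ)..1, ‖fderiv ℝ (fderiv ℝ f) (x + u • y)‖ * ‖y‖ := by
          apply intervalIntegral.integral_mono_interval le_rfl hs.1 hs.2
          · filter_upwards with u
            exact mul_nonneg (norm_nonneg (fderiv ℝ (fderiv ℝ f) (x + u • y))) (norm_nonneg _)
          · exact (hIcont.mul continuous_const).intervalIntegrable 0 1
      _ = I * ‖y‖ := by rw [hI, ← intervalIntegral.integral_mul_const]
  -- main computation
  have hsub : f (x + y) - f x - fderiv ℝ f x y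
      = ∫ s in (0:ℝ)..1, (fderiv ℝ f (x + s • y) y - fderiv ℝ f x y) := by
    rw [intervalIntegral.integral_sub]
    · rw [← key1]
      norm_num
    · exact ((hf'c.comp (line_cont x y)).clm_apply continuous_const).intervalIntegrable 0 1
    · exact intervalIntegrable_const
  rw [hsub]
  calc ‖∫ s in (0:ℝ)..1, (fderiv ℝ f (x + s • y) y - fderiv ℝ f x y)‖
      ≤ ∫ s in (0:ℝ)..1, ‖fderiv ℝ f (x + s • y) y - fderiv ℝ f x y‖ :=
        intervalIntegral.norm_integral_le_integral_norm zero_le_one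
    _ ≤ ∫ s in (0:ℝ)..1, I * ‖y‖ * ‖y‖ := by
        apply intervalIntegral.integral_mono_on zero_le_one
        · exact (((hf'c.comp (line_cont x y)).clm_apply continuous_const).sub
            continuous_const).norm.intervalIntegrable 0 1
        · exact intervalIntegrable_const
        · intro s hs
          calc ‖fderiv ℝ f (x + s • y) y - fderiv ℝ f x y‖
              = ‖(fderiv ℝ f (x + s • y) - fderiv ℝ f x) y‖ := by
                rw [ContinuousLinearMap.sub_apply]
            _ ≤ ‖fderiv ℝ f (x + s • y) - fderiv ℝ f x‖ * ‖y‖ :=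
                ContinuousLinearMap.le_opNorm _ _
            _ ≤ I * ‖y‖ * ‖y‖ :=
                mul_le_mul_of_nonneg_right (hbd s hs) (norm_nonneg _)
    _ = I * ‖y‖ * ‖y‖ := by norm_num
    _ = ‖y‖ ^ 2 * I := by ring
section taylor_ennreal_sec

variable {E : Type*} [NormedAddCommGroup E] [NormedSpace ℝ E]

lemma taylor_ennreal {f : E → ℝ} (hf : ContDiff ℝ 2 f) (x y : E) :
    (‖f (x + y) - f x - fderiv ℝ f x y‖₊ : ℝ≥0∞) ≤
      (‖y‖₊ : ℝ≥0∞) ^ 2 * ∫⁻ u in Icc (0:ℝ) 1, (‖fderiv ℝ (fderiv ℝ f) (x + u • y)‖₊ : ℝ≥0∞) := by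
  have hf'1 : ContDiff ℝ 1 (fderiv ℝ f) := hf.fderiv_right (by norm_num)
  have hf''c : Continuous (fderiv ℝ (fderiv ℝ f)) := hf'1.continuous_fderiv one_ne_zero
  have hIcont : Continuous fun u : ℝ => ‖fderiv ℝ (fderiv ℝ f) (x + u • y)‖ :=
    Continuous.norm (E := E →L[ℝ] E →L[ℝ] ℝ) (hf''c.comp (line_cont x y))
  have hcal : ENNReal.ofReal (∫ u in (0:ℝ)..1, ‖fderiv ℝ (fderiv ℝ f) (x + u • y)‖)
      = ∫⁻ u in Icc (0:ℝ) 1, (‖fderiv ℝ (fderiv ℝ f) (x + u • y)‖₊ : ℝ≥0∞) := by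
    rw [intervalIntegral.integral_of_le zero_le_one,
      ofReal_integral_eq_lintegral_ofReal hIcont.integrableOn_Ioc
        (Filter.Eventually.of_forall fun u => norm_nonneg (fderiv ℝ (fderiv ℝ f) (x + u • y))),
      setLIntegral_congr (Ioc_ae_eq_Icc (μ := (volume : Measure ℝ)))]
    exact lintegral_congr fun u => ofReal_norm (fderiv ℝ (fderiv ℝ f) (x + u • y))
  calc (‖f (x + y) - f x - fderiv ℝ f x y‖₊ : ℝ≥0∞)
      = ENNReal.ofReal ‖f (x + y) - f x - fderiv ℝ f x y‖ :=
        (ofReal_norm _).symm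
    _ ≤ ENNReal.ofReal (‖y‖ ^ 2 * ∫ u in (0:ℝ)..1, ‖fderiv ℝ (fderiv ℝ f) (x + u • y)‖) :=
        ENNReal.ofReal_le_ofReal (taylor_norm_bound hf x y)
    _ = (‖y‖₊ : ℝ≥0∞) ^ 2 * ∫⁻ u in Icc (0:ℝ) 1, (‖fderiv ℝ (fderiv ℝ f) (x + u • y)‖₊ : ℝ≥0∞) := by
        rw [ENNReal.ofReal_mul (by positivity), hcal, ENNReal.ofReal_pow (norm_nonneg y),
          ofReal_norm, enorm_eq_nnnorm]

end taylor_ennreal_sec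
set_option maxHeartbeats 1000000 in
/-- `L^p` a priori estimate for the difference quotient, for
`f ∈ W²_p(ℝ^d)` (formalized as a `C²` representative with `f`, `∇f`, `∇²f` in `L^p`). -/
theorem diff_quotient_Lp_estimate (d : ℕ)
    (μ : ℝ → Measure (EuclideanSpace ℝ (Fin d)))
    (hprob : ∀ t : ℝ, 0 < t → IsProbabilityMeasure (μ t))
    (hM : ∃ h₀ > (0:ℝ), ∃ K : ℝ, ∀ h : ℝ, 0 < h → h < h₀ →
      (1/h) * ((∫ y, min 1 (‖y‖^2) ∂(μ h)) +
        ‖∫ y in {y : EuclideanSpace ℝ (Fin d) | ‖y‖ ≤ 1}, y ∂(μ h)‖) ≤ K)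
    (p : ℝ≥0∞) (hp1 : 1 ≤ p) (hp : p ≠ ∞)
    (M : ℝ) (hMpos : 0 < M) (cM CM : ℝ)
    (hc : ∀ t : ℝ, 0 < t →
      ((μ t) {y : EuclideanSpace ℝ (Fin d) | M < ‖y‖}).toReal / t ≤ cM)
    (hC : ∀ t : ℝ, 0 < t →
      (1/t) * (‖∫ y in {y : EuclideanSpace ℝ (Fin d) | ‖y‖ ≤ M}, y ∂(μ t)‖ +
        ∫ y in {y : EuclideanSpace ℝ (Fin d) | ‖y‖ ≤ M}, ‖y‖^2 ∂(μ t)) ≤ CM)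
    (f : EuclideanSpace ℝ (Fin d) → ℝ) (hf : ContDiff ℝ 2 f)
    (hfp : MemLp f p volume)
    (hf1p : MemLp (fun x => ‖fderiv ℝ f x‖) p volume)
    (hf2p : MemLp (fun x => ‖fderiv ℝ (fderiv ℝ f) x‖) p volume) :
    ∀ t : ℝ, 0 < t →
      eLpNorm (fun x => ∫ y, (f (x + y) - f x) / t ∂(μ t)) p volume ≤
        ENNReal.ofReal (2 * cM * (eLpNorm f p volume).toReal +
          CM * max ((eLpNorm (fun x => ‖fderiv ℝ f x‖) p volume).toReal)
            ((eLpNorm (fun x => ‖fderiv ℝ (fderiv ℝ f) x‖) p volume).toReal)) := by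
  intro t ht
  have hca := hc t ht
  have hCa := hC t ht
  haveI : IsProbabilityMeasure (μ t) := hprob t ht
  set ν := μ t with hν
  have hp0 : p ≠ 0 := (zero_lt_one.trans_le hp1).ne'
  set q := p.toReal with hqdef
  have hq1 : (1:ℝ) ≤ q := by
    rw [hqdef, ← ENNReal.toReal_one]
    exact ENNReal.toReal_mono hp hp1
  have hq0 : (0:ℝ) < q := lt_of_lt_of_le one_pos hq1
  have collapse : ∀ X : ℝ≥0∞, (X ^ q) ^ (1/q) = X := fun X => by
    rw [← ENNReal.rpow_mul, mul_one_div_cancel hq0.ne', ENNReal.rpow_one]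
  have collapse2 : ∀ X : ℝ≥0∞, (X ^ (1/q)) ^ q = X := fun X => by
    rw [← ENNReal.rpow_mul, one_div, inv_mul_cancel₀ hq0.ne', ENNReal.rpow_one]
  -- continuity facts
  have hfc : Continuous f := hf.continuous
  have hf'1 : ContDiff ℝ 1 (fderiv ℝ f) := hf.fderiv_right (by norm_num)
  have hf'c : Continuous (fderiv ℝ f) := hf'1.continuous
  have hf''c : Continuous (fderiv ℝ (fderiv ℝ f)) := hf'1.continuous_fderiv one_ne_zero
  -- sets
  set A : Set (EuclideanSpace ℝ (Fin d)) := {y | M < ‖y‖} with hA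
  set B : Set (EuclideanSpace ℝ (Fin d)) := {y | ‖y‖ ≤ M} with hB
  have hAmeas : MeasurableSet A := measurableSet_lt measurable_const measurable_norm
  have hAc : Aᶜ = B := by ext y; simp [hA, hB, not_lt]
  have hBcomp : IsCompact B := by
    have hBeq : B = Metric.closedBall (0 : EuclideanSpace ℝ (Fin d)) M := by
      ext y; simp [hB, Metric.mem_closedBall, dist_zero_right]
    rw [hBeq]; exact isCompact_closedBall _ _
  set mB := ∫ y in B, y ∂ν with hmB
  set V := ∫ y in B, ‖y‖^2 ∂ν with hV
  set a := ν A with ha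
  have ha_ne : a ≠ ∞ := measure_ne_top ν A
  -- norms
  set Sf := eLpNorm f p volume with hSf
  set Sf1 := eLpNorm (fun x => ‖fderiv ℝ f x‖) p volume with hSf1
  set Sf2 := eLpNorm (fun x => ‖fderiv ℝ (fderiv ℝ f) x‖) p volume with hSf2
  have hNf : (∫⁻ x, (‖f x‖₊ : ℝ≥0∞) ^ q ∂volume) = Sf ^ q := by
    rw [hSf, eLpNorm_eq_lintegral_rpow_enorm_toReal hp0 hp, ← hqdef]
    simp only [enorm_eq_nnnorm]
    rw [collapse2]
  have hNf1 : (∫⁻ x, (‖fderiv ℝ f x‖₊ : ℝ≥0∞) ^ q ∂volume) = Sf1 ^ q := by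
    rw [hSf1, eLpNorm_eq_lintegral_rpow_enorm_toReal hp0 hp, ← hqdef]
    simp only [enorm_eq_nnnorm, nnnorm_norm]
    rw [collapse2]
  have hNf2 : (∫⁻ x, (‖fderiv ℝ (fderiv ℝ f) x‖₊ : ℝ≥0∞) ^ q ∂volume) = Sf2 ^ q := by
    rw [hSf2, eLpNorm_eq_lintegral_rpow_enorm_toReal hp0 hp, ← hqdef]
    simp only [enorm_eq_nnnorm, nnnorm_norm]
    rw [collapse2]
    exact lintegral_congr fun x => congrArg (fun r : NNReal => (r : ℝ≥0∞) ^ q) (nnnorm_norm _).symm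
  have hSf_ne : Sf ≠ ∞ := hfp.2.ne
  have hSf1_ne : Sf1 ≠ ∞ := hf1p.2.ne
  have hSf2_ne : Sf2 ≠ ∞ := hf2p.2.ne
  -- translation invariance
  have htransf : ∀ z : EuclideanSpace ℝ (Fin d),
      (∫⁻ x, (‖f (x + z)‖₊ : ℝ≥0∞) ^ q ∂volume) = Sf ^ q := fun z => by
    rw [← hNf]
    exact lintegral_add_right_eq_self (fun x => (‖f x‖₊ : ℝ≥0∞) ^ q) z
  have htransf2 : ∀ z : EuclideanSpace ℝ (Fin d),
      (∫⁻ x, (‖fderiv ℝ (fderiv ℝ f) (x + z)‖₊ : ℝ≥0∞) ^ q ∂volume) = Sf2 ^ q := fun z => by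
    rw [← hNf2]
    exact lintegral_add_right_eq_self (fun x => (‖fderiv ℝ (fderiv ℝ f) x‖₊ : ℝ≥0∞) ^ q) z
  -- measurability
  have hmeas_f : Measurable (Function.uncurry fun (x y : EuclideanSpace ℝ (Fin d)) =>
      (‖f (x + y)‖₊ : ℝ≥0∞)) :=
    ((hfc.comp (continuous_fst.add continuous_snd)).nnnorm).measurable.coe_nnreal_ennreal
  -- a.e. integrability of the translated function
  have key_int : ∀ᵐ x ∂(volume : Measure (EuclideanSpace ℝ (Fin d))),
      Integrable (fun y => f (x + y)) ν := by
    have hFmeas : Measurable fun x => ∫⁻ y, (‖f (x + y)‖₊ : ℝ≥0∞) ∂ν :=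
      hmeas_f.lintegral_prod_right
    have hFb : (∫⁻ x, (∫⁻ y, (‖f (x + y)‖₊ : ℝ≥0∞) ∂ν) ^ q ∂volume) ≤ Sf ^ q := by
      have hj := jensen_minkowski volume ν hq1 hmeas_f
        (measurable_const : Measurable fun _ : EuclideanSpace ℝ (Fin d) => (1:ℝ≥0∞))
        (c := Sf) (fun y => le_of_eq (htransf y))
      simpa using hj
    have hFfin : (∫⁻ x, (∫⁻ y, (‖f (x + y)‖₊ : ℝ≥0∞) ∂ν) ^ q ∂volume) ≠ ∞ :=
      (lt_of_le_of_lt hFb (ENNReal.rpow_lt_top_of_nonneg hq0.le hSf_ne)).ne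
    filter_upwards [ae_lt_top (hFmeas.pow_const q) hFfin] with x hx
    have hx' : (∫⁻ y, (‖f (x + y)‖₊ : ℝ≥0∞) ∂ν) < ∞ := by
      rwa [ENNReal.rpow_lt_top_iff_of_pos hq0] at hx
    exact ⟨(hfc.comp (continuous_const.add continuous_id)).aestronglyMeasurable, hx'⟩
  -- the four dominating functions
  set h1 : EuclideanSpace ℝ (Fin d) → ℝ≥0∞ :=
    fun x => ∫⁻ y in A, (‖f (x + y)‖₊ : ℝ≥0∞) ∂ν with hh1
  set h2 : EuclideanSpace ℝ (Fin d) → ℝ≥0∞ :=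
    fun x => (‖f x‖₊ : ℝ≥0∞) * a with hh2
  set h3 : EuclideanSpace ℝ (Fin d) → ℝ≥0∞ :=
    fun x => (‖fderiv ℝ f x‖₊ : ℝ≥0∞) * ‖mB‖₊ with hh3
  set h4 : EuclideanSpace ℝ (Fin d) → ℝ≥0∞ :=
    fun x => ∫⁻ y in B, (‖y‖₊ : ℝ≥0∞) ^ 2 *
      (∫⁻ u in Icc (0:ℝ) 1, (‖fderiv ℝ (fderiv ℝ f) (x + u • y)‖₊ : ℝ≥0∞)) ∂ν with hh4
  -- the pointwise a.e. bound
  have claim : ∀ᵐ x ∂(volume : Measure (EuclideanSpace ℝ (Fin d))),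
      (‖(∫ y, (f (x + y) - f x) / t ∂ν)‖₊ : ℝ≥0∞) ≤
        ENNReal.ofReal t⁻¹ * (h1 x + h2 x + h3 x + h4 x) := by
    filter_upwards [key_int] with x hx
    have hint0 : Integrable (fun y => f (x + y) - f x) ν := hx.sub (integrable_const _)
    have hGx : (∫ y, (f (x + y) - f x) / t ∂ν) = t⁻¹ • ∫ y, (f (x + y) - f x) ∂ν := by
      rw [← integral_smul]
      congr 1
      ext y
      simp [div_eq_inv_mul, smul_eq_mul]
    rw [hGx, nnnorm_smul, ENNReal.coe_mul, ← enorm_eq_nnnorm, Real.enorm_eq_ofReal (inv_nonneg.mpr ht.le)]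
    refine mul_le_mul_right ?_ _
    -- split the integral
    have hsplitA := (integral_add_compl hAmeas hint0).symm
    rw [hAc] at hsplitA
    -- decompose the near-field part
    have hlin : IntegrableOn (fun y => fderiv ℝ f x y) B ν :=
      ContinuousOn.integrableOn_compact hBcomp ((fderiv ℝ f x).continuous.continuousOn)
    have hres : IntegrableOn (fun y => f (x + y) - f x) B ν := hint0.integrableOn
    have hRint : IntegrableOn (fun y => f (x + y) - f x - fderiv ℝ f x y) B ν :=
      hres.sub hlin
    have hid : IntegrableOn (fun y => y) B ν :=
      ContinuousOn.integrableOn_compact hBcomp continuous_id.continuousOn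
    have hdecomp : (∫ y in B, (f (x + y) - f x) ∂ν)
        = fderiv ℝ f x mB + ∫ y in B, (f (x + y) - f x - fderiv ℝ f x y) ∂ν := by
      rw [hmB, ← ContinuousLinearMap.integral_comp_comm _ hid, ← integral_add hlin hRint]
      congr 1
      ext y
      ring
    have e1 : (‖∫ y in A, (f (x + y) - f x) ∂ν‖₊ : ℝ≥0∞) ≤ h1 x + h2 x := by
      calc (‖∫ y in A, (f (x + y) - f x) ∂ν‖₊ : ℝ≥0∞)
          ≤ ∫⁻ y in A, (‖f (x + y) - f x‖₊ : ℝ≥0∞) ∂ν :=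
            enorm_integral_le_lintegral_enorm _
        _ ≤ ∫⁻ y in A, ((‖f (x + y)‖₊ : ℝ≥0∞) + ‖f x‖₊) ∂ν := by
            refine lintegral_mono fun y => ?_
            exact ENNReal.coe_le_coe.mpr (nnnorm_sub_le (f (x + y)) (f x))
        _ = h1 x + h2 x := by
            rw [lintegral_add_right _ measurable_const, lintegral_const,
              Measure.restrict_apply_univ]
    have e2 : (‖fderiv ℝ f x mB‖₊ : ℝ≥0∞) ≤ h3 x := by
      simp only [hh3]
      exact_mod_cast (fderiv ℝ f x).le_opNNNorm mB
    have e3 : (‖∫ y in B, (f (x + y) - f x - fderiv ℝ f x y) ∂ν‖₊ : ℝ≥0∞) ≤ h4 x := by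
      calc (‖∫ y in B, (f (x + y) - f x - fderiv ℝ f x y) ∂ν‖₊ : ℝ≥0∞)
          ≤ ∫⁻ y in B, (‖f (x + y) - f x - fderiv ℝ f x y‖₊ : ℝ≥0∞) ∂ν :=
            enorm_integral_le_lintegral_enorm _
        _ ≤ h4 x := lintegral_mono fun y => taylor_ennreal hf x y
    calc (‖∫ y, (f (x + y) - f x) ∂ν‖₊ : ℝ≥0∞)
        = ‖(∫ y in A, (f (x + y) - f x) ∂ν) +
            (fderiv ℝ f x mB + ∫ y in B, (f (x + y) - f x - fderiv ℝ f x y) ∂ν)‖₊ := by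
          rw [hsplitA, hdecomp]
      _ ≤ (‖∫ y in A, (f (x + y) - f x) ∂ν‖₊ : ℝ≥0∞) +
            ((‖fderiv ℝ f x mB‖₊ : ℝ≥0∞) +
              ‖∫ y in B, (f (x + y) - f x - fderiv ℝ f x y) ∂ν‖₊) := by
          exact_mod_cast (nnnorm_add_le (∫ y in A, (f (x + y) - f x) ∂ν)
              ((fderiv ℝ f x) mB + ∫ y in B, (f (x + y) - f x - fderiv ℝ f x y) ∂ν)).trans
            (add_le_add_right (nnnorm_add_le ((fderiv ℝ f x) mB)
              (∫ y in B, (f (x + y) - f x - fderiv ℝ f x y) ∂ν)) _)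
      _ ≤ (h1 x + h2 x) + (h3 x + h4 x) := add_le_add e1 (add_le_add e2 e3)
      _ = h1 x + h2 x + h3 x + h4 x := by ring
  -- measurability of the dominating functions
  have hmeas_f2 : Measurable (Function.uncurry
      fun (z : EuclideanSpace ℝ (Fin d) × EuclideanSpace ℝ (Fin d)) (u : ℝ) =>
        (‖fderiv ℝ (fderiv ℝ f) (z.1 + u • z.2)‖₊ : ℝ≥0∞)) := by
    apply Measurable.coe_nnreal_ennreal
    apply Continuous.measurable
    exact (hf''c.comp ((continuous_fst.comp continuous_fst).add
      (continuous_snd.smul (continuous_snd.comp continuous_fst)))).nnnorm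
  have hg2 : Measurable fun (z : EuclideanSpace ℝ (Fin d) × EuclideanSpace ℝ (Fin d)) =>
      ∫⁻ u in Icc (0:ℝ) 1, (‖fderiv ℝ (fderiv ℝ f) (z.1 + u • z.2)‖₊ : ℝ≥0∞) :=
    hmeas_f2.lintegral_prod_right
  have hm1 : Measurable h1 := by
    rw [hh1]
    exact hmeas_f.lintegral_prod_right
  have hm2 : Measurable h2 := by
    rw [hh2]
    exact (hfc.measurable.nnnorm.coe_nnreal_ennreal).mul measurable_const
  have hm3 : Measurable h3 := by
    rw [hh3]
    exact (hf'c.measurable.nnnorm.coe_nnreal_ennreal).mul measurable_const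
  have hm4 : Measurable h4 := by
    rw [hh4]
    have hu : Measurable (Function.uncurry
        fun (x y : EuclideanSpace ℝ (Fin d)) => (‖y‖₊ : ℝ≥0∞) ^ 2 *
          ∫⁻ u in Icc (0:ℝ) 1, (‖fderiv ℝ (fderiv ℝ f) (x + u • y)‖₊ : ℝ≥0∞)) :=
      (((measurable_nnnorm.comp measurable_snd).coe_nnreal_ennreal).pow_const 2).mul hg2
    exact hu.lintegral_prod_right
  -- the N_i quantities
  set N1 := (∫⁻ x, h1 x ^ q ∂volume) ^ (1/q) with hN1def
  set N2 := (∫⁻ x, h2 x ^ q ∂volume) ^ (1/q) with hN2def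
  set N3 := (∫⁻ x, h3 x ^ q ∂volume) ^ (1/q) with hN3def
  set N4 := (∫⁻ x, h4 x ^ q ∂volume) ^ (1/q) with hN4def
  -- bounds for each N_i
  have hN1 : N1 ≤ Sf * a := by
    have hj := jensen_minkowski volume (ν.restrict A) hq1 hmeas_f
      (measurable_const : Measurable fun _ : EuclideanSpace ℝ (Fin d) => (1:ℝ≥0∞))
      (c := Sf) (fun y => le_of_eq (htransf y))
    simp only [one_mul, lintegral_one, Measure.restrict_apply_univ] at hj
    rw [hN1def]
    calc (∫⁻ x, h1 x ^ q ∂volume) ^ (1/q) ≤ ((Sf * a) ^ q) ^ (1/q) :=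
        ENNReal.rpow_le_rpow hj (by positivity)
      _ = Sf * a := collapse _
  have hN2 : N2 = Sf * a := by
    rw [hN2def, hh2]
    simp only [ENNReal.mul_rpow_of_nonneg _ _ hq0.le]
    rw [lintegral_mul_const' _ _ (ENNReal.rpow_lt_top_of_nonneg hq0.le ha_ne).ne, hNf,
      ← ENNReal.mul_rpow_of_nonneg _ _ hq0.le, collapse]
  have hN3 : N3 = Sf1 * ‖mB‖₊ := by
    rw [hN3def, hh3]
    simp only [ENNReal.mul_rpow_of_nonneg _ _ hq0.le]
    rw [lintegral_mul_const' _ _ (ENNReal.rpow_lt_top_of_nonneg hq0.le ENNReal.coe_ne_top).ne,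
      hNf1, ← ENNReal.mul_rpow_of_nonneg _ _ hq0.le, collapse]
  set WB := ∫⁻ y in B, (‖y‖₊ : ℝ≥0∞) ^ 2 ∂ν with hWBdef
  have hN4 : N4 ≤ Sf2 * WB := by
    have hgc2 : ∀ y : EuclideanSpace ℝ (Fin d),
        (∫⁻ x, (∫⁻ u in Icc (0:ℝ) 1,
          (‖fderiv ℝ (fderiv ℝ f) (x + u • y)‖₊ : ℝ≥0∞)) ^ q ∂volume) ≤ Sf2 ^ q := by
      intro y
      have hmeasin : Measurable (Function.uncurry
          fun (x : EuclideanSpace ℝ (Fin d)) (u : ℝ) =>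
            (‖fderiv ℝ (fderiv ℝ f) (x + u • y)‖₊ : ℝ≥0∞)) := by
        apply Measurable.coe_nnreal_ennreal
        apply Continuous.measurable
        exact (hf''c.comp (continuous_fst.add (continuous_snd.smul continuous_const))).nnnorm
      have hj := jensen_minkowski volume (volume.restrict (Icc (0:ℝ) 1)) hq1 hmeasin
        (measurable_const : Measurable fun _ : ℝ => (1:ℝ≥0∞))
        (c := Sf2) (fun u => le_of_eq (htransf2 (u • y)))
      simp only [one_mul, lintegral_one, Measure.restrict_apply_univ, Real.volume_Icc,
        sub_zero, ENNReal.ofReal_one, mul_one] at hj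
      exact hj
    have huncurry : Measurable (Function.uncurry
        fun (x y : EuclideanSpace ℝ (Fin d)) =>
          ∫⁻ u in Icc (0:ℝ) 1, (‖fderiv ℝ (fderiv ℝ f) (x + u • y)‖₊ : ℝ≥0∞)) := hg2
    have hwmeas : Measurable fun y : EuclideanSpace ℝ (Fin d) => (‖y‖₊ : ℝ≥0∞) ^ 2 :=
      (measurable_nnnorm.coe_nnreal_ennreal).pow_const 2
    have hj := jensen_minkowski volume (ν.restrict B) hq1 huncurry hwmeas
      (c := Sf2) hgc2
    rw [hN4def]
    calc (∫⁻ x, h4 x ^ q ∂volume) ^ (1/q) ≤ ((Sf2 * WB) ^ q) ^ (1/q) :=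
        ENNReal.rpow_le_rpow hj (by positivity)
      _ = Sf2 * WB := collapse _
  -- identify WB
  have hVnn : (0:ℝ) ≤ V := by
    rw [hV]
    exact integral_nonneg fun y => sq_nonneg _
  have hWB : WB = ENNReal.ofReal V := by
    rw [hWBdef, hV, ofReal_integral_eq_lintegral_ofReal (f := fun y => ‖y‖^2)
      (ContinuousOn.integrableOn_compact hBcomp ((continuous_norm.pow 2).continuousOn))
      (Filter.Eventually.of_forall fun y => sq_nonneg _)]
    refine lintegral_congr fun y => ?_
    rw [ENNReal.ofReal_pow (norm_nonneg y), ofReal_norm, enorm_eq_nnnorm]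
  clear_value N1 N2 N3 N4 WB h1 h2 h3 h4 Sf Sf1 Sf2 a mB V A B ν
  -- real-number quantities
  set sf := Sf.toReal with hsfdef
  set s1 := Sf1.toReal with hs1def
  set s2 := Sf2.toReal with hs2def
  set ar := a.toReal with hardef
  have hsf0 : (0:ℝ) ≤ sf := ENNReal.toReal_nonneg
  have hs10 : (0:ℝ) ≤ s1 := ENNReal.toReal_nonneg
  have hs20 : (0:ℝ) ≤ s2 := ENNReal.toReal_nonneg
  have har0 : (0:ℝ) ≤ ar := ENNReal.toReal_nonneg
  have hSfeq : Sf = ENNReal.ofReal sf := (ENNReal.ofReal_toReal hSf_ne).symm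
  have hSf1eq : Sf1 = ENNReal.ofReal s1 := (ENNReal.ofReal_toReal hSf1_ne).symm
  have hSf2eq : Sf2 = ENNReal.ofReal s2 := (ENNReal.ofReal_toReal hSf2_ne).symm
  have haeq : a = ENNReal.ofReal ar := (ENNReal.ofReal_toReal ha_ne).symm
  have hmBeq : (‖mB‖₊ : ℝ≥0∞) = ENNReal.ofReal ‖mB‖ := (ofReal_norm mB).symm
  -- the real inequality
  have hreal : t⁻¹ * (sf * ar + sf * ar + s1 * ‖mB‖ + s2 * V)
      ≤ 2 * cM * sf + CM * max s1 s2 := by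
    have hmax0 : (0:ℝ) ≤ max s1 s2 := le_trans hs10 (le_max_left _ _)
    have e1 : t⁻¹ * (sf * ar) ≤ cM * sf := by
      calc t⁻¹ * (sf * ar) = sf * (ar / t) := by rw [div_eq_mul_inv]; ring
        _ ≤ sf * cM := mul_le_mul_of_nonneg_left hca hsf0
        _ = cM * sf := mul_comm _ _
    have e2 : t⁻¹ * (s1 * ‖mB‖ + s2 * V) ≤ CM * max s1 s2 := by
      have hstep : s1 * ‖mB‖ + s2 * V ≤ max s1 s2 * (‖mB‖ + V) := by
        have := add_le_add
          (mul_le_mul_of_nonneg_right (le_max_left s1 s2) (norm_nonneg mB))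
          (mul_le_mul_of_nonneg_right (le_max_right s1 s2) hVnn)
        calc s1 * ‖mB‖ + s2 * V ≤ max s1 s2 * ‖mB‖ + max s1 s2 * V := this
          _ = max s1 s2 * (‖mB‖ + V) := by ring
      calc t⁻¹ * (s1 * ‖mB‖ + s2 * V)
          ≤ t⁻¹ * (max s1 s2 * (‖mB‖ + V)) :=
            mul_le_mul_of_nonneg_left hstep (inv_nonneg.mpr ht.le)
        _ = max s1 s2 * (1 / t * (‖mB‖ + V)) := by ring
        _ ≤ max s1 s2 * CM := mul_le_mul_of_nonneg_left hCa hmax0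
        _ = CM * max s1 s2 := mul_comm _ _
    calc t⁻¹ * (sf * ar + sf * ar + s1 * ‖mB‖ + s2 * V)
        = t⁻¹ * (sf * ar) + t⁻¹ * (sf * ar) + t⁻¹ * (s1 * ‖mB‖ + s2 * V) := by ring
      _ ≤ cM * sf + cM * sf + CM * max s1 s2 := add_le_add (add_le_add e1 e1) e2
      _ = 2 * cM * sf + CM * max s1 s2 := by ring
  -- assemble everything
  rw [eLpNorm_eq_lintegral_rpow_enorm_toReal hp0 hp, ← hqdef]
  have step1 : (∫⁻ x, (‖∫ y, (f (x + y) - f x) / t ∂ν‖₊ : ℝ≥0∞) ^ q ∂volume)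
      ≤ (ENNReal.ofReal t⁻¹) ^ q * ∫⁻ x, (h1 x + h2 x + h3 x + h4 x) ^ q ∂volume := by
    rw [← lintegral_const_mul' _ _
      (ENNReal.rpow_lt_top_of_nonneg hq0.le ENNReal.ofReal_ne_top).ne]
    refine lintegral_mono_ae ?_
    filter_upwards [claim] with x hx
    calc (‖∫ y, (f (x + y) - f x) / t ∂ν‖₊ : ℝ≥0∞) ^ q
        ≤ (ENNReal.ofReal t⁻¹ * (h1 x + h2 x + h3 x + h4 x)) ^ q :=
          ENNReal.rpow_le_rpow hx hq0.le
      _ = (ENNReal.ofReal t⁻¹) ^ q * (h1 x + h2 x + h3 x + h4 x) ^ q :=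
          ENNReal.mul_rpow_of_nonneg _ _ hq0.le
  have step2 : (∫⁻ x, (h1 x + h2 x + h3 x + h4 x) ^ q ∂volume) ^ (1/q)
      ≤ N1 + N2 + N3 + N4 := by
    calc (∫⁻ x, (h1 x + h2 x + h3 x + h4 x) ^ q ∂volume) ^ (1/q)
        ≤ (∫⁻ x, (h1 x + h2 x + h3 x) ^ q ∂volume) ^ (1/q) + N4 := by
          have := ENNReal.lintegral_Lp_add_le (μ := (volume : Measure (EuclideanSpace ℝ (Fin d))))
            (f := fun x => h1 x + h2 x + h3 x) (g := h4)
            ((hm1.add hm2).add hm3).aemeasurable hm4.aemeasurable hq1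
          simpa [hN4def] using this
      _ ≤ ((∫⁻ x, (h1 x + h2 x) ^ q ∂volume) ^ (1/q) + N3) + N4 := by
          refine add_le_add_left ?_ _
          have := ENNReal.lintegral_Lp_add_le (μ := (volume : Measure (EuclideanSpace ℝ (Fin d))))
            (f := fun x => h1 x + h2 x) (g := h3)
            (hm1.add hm2).aemeasurable hm3.aemeasurable hq1
          simpa [hN3def] using this
      _ ≤ ((N1 + N2) + N3) + N4 := by
          refine add_le_add_left (add_le_add_left ?_ _) _
          have := ENNReal.lintegral_Lp_add_le (μ := (volume : Measure (EuclideanSpace ℝ (Fin d))))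
            (f := h1) (g := h2) hm1.aemeasurable hm2.aemeasurable hq1
          simpa [hN1def, hN2def] using this
      _ = N1 + N2 + N3 + N4 := by ring
  calc (∫⁻ x, (‖∫ y, (f (x + y) - f x) / t ∂ν‖₊ : ℝ≥0∞) ^ q ∂volume) ^ (1/q)
      ≤ ((ENNReal.ofReal t⁻¹) ^ q * ∫⁻ x, (h1 x + h2 x + h3 x + h4 x) ^ q ∂volume) ^ (1/q) :=
        ENNReal.rpow_le_rpow step1 (by positivity)
    _ = ENNReal.ofReal t⁻¹ * (∫⁻ x, (h1 x + h2 x + h3 x + h4 x) ^ q ∂volume) ^ (1/q) := by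
        rw [ENNReal.mul_rpow_of_nonneg _ _ (by positivity), collapse]
    _ ≤ ENNReal.ofReal t⁻¹ * (N1 + N2 + N3 + N4) := mul_le_mul_right step2 _
    _ ≤ ENNReal.ofReal t⁻¹ * (Sf * a + Sf * a + Sf1 * ‖mB‖₊ + Sf2 * ENNReal.ofReal V) := by
        refine mul_le_mul_right ?_ _
        refine add_le_add (add_le_add (add_le_add hN1 hN2.le) hN3.le) ?_
        rw [← hWB]
        exact hN4
    _ = ENNReal.ofReal (t⁻¹ * (sf * ar + sf * ar + s1 * ‖mB‖ + s2 * V)) := by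
        rw [hSfeq, hSf1eq, hSf2eq, haeq, hmBeq,
          ← ENNReal.ofReal_mul hsf0, ← ENNReal.ofReal_mul hs10, ← ENNReal.ofReal_mul hs20,
          ← ENNReal.ofReal_add (mul_nonneg hsf0 har0) (mul_nonneg hsf0 har0),
          ← ENNReal.ofReal_add (by positivity) (mul_nonneg hs10 (norm_nonneg mB)),
          ← ENNReal.ofReal_add (by positivity) (mul_nonneg hs20 hVnn),
          ← ENNReal.ofReal_mul (inv_nonneg.mpr ht.le)]
    _ ≤ ENNReal.ofReal (2 * cM * sf + CM * max s1 s2) := ENNReal.ofReal_le_ofReal hreal
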